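/- Let G be a countable discrete group, residually finite with respect to a sequence of finite-index normal subgroups G = N₀ ⊇ N₁ ⊇ N₂ ⊇ ⋯ with ⋂_{i≥1} N_i = {1}, equipped with a proper length function and the induced left-invariant metric, each G/N_i carrying the quotient metric. Then the box space □_{N_i}G has FDC if and only if the metric family {G/N_i : i ∈ ℕ} has FDC. In particular, if G has stable FDC, then the box space □_{N_i}G has FDC. -/

import Mathlib

open Set Filter
open scoped symmDiff

namespace FDCPaper

/-! ### Proper functions `[0,∞) → ℝ` : preimages of bounded sets are bounded. -/

def ProperFn (ρ : ℝ → ℝ) : Prop :=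
  ∀ C : ℝ, ∃ M : ℝ, ∀ t : ℝ, 0 ≤ t → |ρ t| ≤ C → t ≤ M

/-! ### Length functions on groups and the induced metrics -/

structure IsLengthFunction {G : Type*} [Group G] (l : G → ℝ) : Prop where
  nonneg : ∀ g, 0 ≤ l g
  len_one : l 1 = 0
  len_inv : ∀ g, l g⁻¹ = l g
  subadd : ∀ g h, l (g * h) ≤ l g + l h
  eq_one : ∀ g, l g = 0 → g = 1
  proper : ∀ R : ℝ, {g : G | l g ≤ R}.Finite

/-- The left invariant distance induced by a length function. -/
def dl {G : Type*} [Group G] (l : G → ℝ) (g h : G) : ℝ := l (g⁻¹ * h)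

/-- The quotient distance on `G ⧸ N`:
`d([g],[h]) = inf { d_G(g n₁, h n₂) : n₁, n₂ ∈ N }`. -/
noncomputable def qdist {G : Type*} [Group G] (l : G → ℝ) (N : Subgroup G)
    (x y : G ⧸ N) : ℝ :=
  sInf {r : ℝ | ∃ g h : G, (QuotientGroup.mk g : G ⧸ N) = x ∧
    (QuotientGroup.mk h : G ⧸ N) = y ∧ r = dl l g h}

/-- The quotient length on `G ⧸ N` : `l̄([g]) = inf { l(h) : [h] = [g] }`. -/
noncomputable def qlen {G : Type*} [Group G] (l : G → ℝ) (N : Subgroup G) (x : G ⧸ N) : ℝ :=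
  sInf {r : ℝ | ∃ g : G, (QuotientGroup.mk g : G ⧸ N) = x ∧ r = l g}

/-! ### Families of subsets of a single ambient space, decompositions -/

section Single

variable {α : Type*}

/-- The open ball, for a distance function. -/
def ballS (d : α → α → ℝ) (c : α) (R : ℝ) : Set α := {x | d c x < R}

/-- An `r`-disjoint family of subsets. -/
def rDisjS (d : α → α → ℝ) (r : ℝ) (P : Set (Set α)) : Prop :=
  ∀ A ∈ P, ∀ B ∈ P, A ≠ B → ∀ x ∈ A, ∀ y ∈ B, r ≤ d x y

/-- A uniformly bounded family of subsets. -/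
def BddS (d : α → α → ℝ) (𝒴 : Set (Set α)) : Prop :=
  ∃ C : ℝ, ∀ Y ∈ 𝒴, ∀ x ∈ Y, ∀ y ∈ Y, d x y ≤ C

/-- `X = X₀ ∪ X₁` where each `Xᵢ` is an `r`-disjoint union of members of `𝒴`. -/
def PieceDecomp (d : α → α → ℝ) (r : ℝ) (X : Set α) (𝒴 : Set (Set α)) : Prop :=
  ∃ P₀ P₁ : Set (Set α),
    X = ⋃₀ P₀ ∪ ⋃₀ P₁ ∧ rDisjS d r P₀ ∧ rDisjS d r P₁ ∧ ∀ A ∈ P₀ ∪ P₁, A ∈ 𝒴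

/-- `X = X₀ ∪ X₁`, `Xᵢ = ∪ⱼ Xᵢⱼ` with `Xᵢⱼ ∈ 𝒴`, and the cover `{Xᵢⱼ}` of `X` has
Lebesgue number `≥ R`. -/
def PieceFullDecomp (d : α → α → ℝ) (R : ℝ) (X : Set α) (𝒴 : Set (Set α)) : Prop :=
  ∃ P₀ P₁ : Set (Set α),
    X = ⋃₀ P₀ ∪ ⋃₀ P₁ ∧
    (∀ x ∈ X, ∃ A ∈ P₀ ∪ P₁, {y ∈ X | d x y < R} ⊆ A) ∧
    ∀ A ∈ P₀ ∪ P₁, A ∈ 𝒴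

/-- `𝒳` is `r`-decomposable over `𝒴` (families of subsets of a single space). -/
def DecompS (d : α → α → ℝ) (r : ℝ) (𝒳 𝒴 : Set (Set α)) : Prop :=
  ∀ X ∈ 𝒳, PieceDecomp d r X 𝒴

/-- `𝒳` is `R`-full decomposable over `𝒴`. -/
def FullDecompS (d : α → α → ℝ) (R : ℝ) (𝒳 𝒴 : Set (Set α)) : Prop :=
  ∀ X ∈ 𝒳, PieceFullDecomp d R X 𝒴

/-- Straight finite decomposition complexity of a family of subsets of a space. -/
def sFDCS (d : α → α → ℝ) (𝒳 : Set (Set α)) : Prop :=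
  ∀ R : ℕ → ℝ, (∀ n, 0 < R n) → StrictMono R →
    ∃ (m : ℕ) (𝒴 : ℕ → Set (Set α)), 𝒴 0 = 𝒳 ∧
      (∀ i < m, DecompS d (R i) (𝒴 i) (𝒴 (i + 1))) ∧ BddS d (𝒴 m)

/-- Straight FDC of a metric space, i.e. of the singleton family `{X}`. -/
def SpaceSFDC (d : α → α → ℝ) : Prop := sFDCS d {Set.univ}

end Single

/-! ### General metric families and finite decomposition complexity -/

/-- A metric family, realized as a set of subsets of an indexed collection of spaces
`Z i`, each equipped with its distance function. -/
abbrev Fam {ι : Type*} (Z : ι → Type*) := Set ((i : ι) × Set (Z i))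

section Families

variable {ι : Type*} {Z : ι → Type*}

/-- A (uniformly) bounded metric family. -/
def Bdd (d : ∀ i, Z i → Z i → ℝ) (𝒴 : Fam Z) : Prop :=
  ∃ C : ℝ, ∀ p ∈ 𝒴, ∀ x ∈ p.2, ∀ y ∈ p.2, d p.1 x y ≤ C

/-- The metric family `𝒳` is `r`-decomposable over the metric family `𝒴`. -/
def Decomp (d : ∀ i, Z i → Z i → ℝ) (r : ℝ) (𝒳 𝒴 : Fam Z) : Prop :=
  ∀ p ∈ 𝒳, PieceDecomp (d p.1) r p.2
    {A : Set (Z p.1) | (⟨p.1, A⟩ : (i : ι) × Set (Z i)) ∈ 𝒴}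

/-- The collections `D_α` : `D_0` consists of the bounded families, and for `α > 0`,
`𝒳 ∈ D_α` iff for every `r > 0` there are `β < α` and `𝒴 ∈ D_β` with `𝒳 →_r 𝒴`. -/
def DColl (d : ∀ i, Z i → Z i → ℝ) (α : Ordinal.{0}) : Set (Fam Z) :=
  {𝒳 | (α = 0 ∧ Bdd d 𝒳) ∨
    (α ≠ 0 ∧ ∀ r : ℝ, 0 < r →
      ∃ β : Ordinal.{0}, ∃ _ : β < α, ∃ 𝒴 ∈ DColl d β, Decomp d r 𝒳 𝒴)}
  termination_by α

/-- A metric family has finite decomposition complexity if it belongs to some `D_α`. -/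
def HasFDC (d : ∀ i, Z i → Z i → ℝ) (𝒳 : Fam Z) : Prop :=
  ∃ α : Ordinal.{0}, 𝒳 ∈ DColl d α

end Families

/-- FDC of a single metric space, i.e. of the singleton family `{X}`. -/
def SpaceFDC {X : Type*} (d : X → X → ℝ) : Prop :=
  HasFDC (ι := Unit) (Z := fun _ => X) (fun _ => d) {p | p.2 = Set.univ}

/-! ### Coarse disjoint unions and box spaces -/

/-- The diameter of a space with a distance function. -/
noncomputable def diamD {X : Type*} (d : X → X → ℝ) : ℝ :=
  sSup {r : ℝ | ∃ x y : X, r = d x y}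

/-- The coarse disjoint union distance: each piece keeps its own distance, and
`d(x,y) = diam Xᵢ + diam Xⱼ + i + j` for `x ∈ Xᵢ`, `y ∈ Xⱼ` with `i ≠ j`. -/
noncomputable def cuDist {X : ℕ → Type*} (d : ∀ i, X i → X i → ℝ) :
    (Σ i, X i) → (Σ i, X i) → ℝ := fun x y =>
  if h : x.1 = y.1 then d y.1 (h ▸ x.2) y.2
  else diamD (d x.1) + diamD (d y.1) + (x.1 : ℝ) + (y.1 : ℝ)

/-- The box space `□_{Nᵢ} G` : the coarse disjoint union of the quotients `G ⧸ Nᵢ`. -/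
noncomputable def boxDist {G : Type*} [Group G] (l : G → ℝ) (N : ℕ → Subgroup G) :
    (Σ i, G ⧸ N i) → (Σ i, G ⧸ N i) → ℝ :=
  cuDist (fun i => qdist l (N i))

/-! ### Equivariance -/

section EquivGroup

variable {G : Type*} [Group G]

/-- A family of subsets of `G` is `H`-invariant if it is closed under right
translation by elements of `H`. -/
def RInvFam (H : Subgroup G) (P : Set (Set G)) : Prop :=
  ∀ U ∈ P, ∀ h ∈ H, (fun g => g * h) '' U ∈ P

/-- An `H`-invariant decomposition of a single subset of `G`. -/
def PieceDecompInv (d : G → G → ℝ) (H : Subgroup G) (r : ℝ) (X : Set G)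
    (𝒴 : Set (Set G)) : Prop :=
  ∃ P₀ P₁ : Set (Set G),
    X = ⋃₀ P₀ ∪ ⋃₀ P₁ ∧ rDisjS d r P₀ ∧ rDisjS d r P₁ ∧
    (∀ A ∈ P₀ ∪ P₁, A ∈ 𝒴) ∧ RInvFam H P₀ ∧ RInvFam H P₁

/-- An `H`-invariant decomposition `𝒳 →_r 𝒴` of families of subsets of `G`. -/
def DecompSInv (d : G → G → ℝ) (H : Subgroup G) (r : ℝ) (𝒳 𝒴 : Set (Set G)) : Prop :=
  ∀ X ∈ 𝒳, PieceDecompInv d H r X 𝒴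

/-- An `H`-invariant full decomposition of a single subset of `G`. -/
def PieceFullDecompInv (d : G → G → ℝ) (H : Subgroup G) (R : ℝ) (X : Set G)
    (𝒴 : Set (Set G)) : Prop :=
  ∃ P₀ P₁ : Set (Set G),
    X = ⋃₀ P₀ ∪ ⋃₀ P₁ ∧
    (∀ x ∈ X, ∃ A ∈ P₀ ∪ P₁, {y ∈ X | d x y < R} ⊆ A) ∧
    (∀ A ∈ P₀ ∪ P₁, A ∈ 𝒴) ∧ RInvFam H P₀ ∧ RInvFam H P₁

/-- An `H`-invariant full decomposition `𝒳 ↝_R 𝒴` of families of subsets of `G`. -/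
def FullDecompSInv (d : G → G → ℝ) (H : Subgroup G) (R : ℝ) (𝒳 𝒴 : Set (Set G)) : Prop :=
  ∀ X ∈ 𝒳, PieceFullDecompInv d H R X 𝒴

/-- `G` has equi-variant straight FDC with respect to the sequence `{Nᵢ}` : for any
increasing sequence `R₁ < R₂ < ⋯` of positive reals there are `m`, `K` and a chain
of decompositions `{G} →_{R₁} 𝒴₁ →_{R₂} ⋯ →_{R_m} 𝒴_m` with `𝒴_m` bounded and the
last decomposition `N_K`-invariant. -/
def EquivSFDC (d : G → G → ℝ) (N : ℕ → Subgroup G) : Prop :=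
  ∀ R : ℕ → ℝ, (∀ n, 0 < R n) → StrictMono R →
    ∃ m K : ℕ, 0 < m ∧ ∃ 𝒴 : ℕ → Set (Set G), 𝒴 0 = {Set.univ} ∧
      (∀ i < m, DecompS d (R i) (𝒴 i) (𝒴 (i + 1))) ∧ BddS d (𝒴 m) ∧
      DecompSInv d (N K) (R (m - 1)) (𝒴 (m - 1)) (𝒴 m)

end EquivGroup

/-! ### Stable FDC -/

/-- The distances on the members of the family `{H/K : K ⊴ H ≤ G}` : `H` carries the
metric induced from `G` and `H/K` the corresponding quotient metric. -/
noncomputable def stableD {G : Type*} [Group G] (l : G → ℝ) :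
    ∀ p : Σ H : Subgroup G, Subgroup ↥H, (↥p.1 ⧸ p.2) → (↥p.1 ⧸ p.2) → ℝ :=
  fun p => qdist (fun h : ↥p.1 => l ↑h) p.2

/-- `G` has stable FDC if the family `{H/K : K ⊴ H ≤ G}` has FDC. -/
def StableFDC (G : Type*) [Group G] (l : G → ℝ) : Prop :=
  HasFDC (stableD l)
    {q : (p : Σ H : Subgroup G, Subgroup ↥H) × Set (↥p.1 ⧸ p.2) |
      q.1.2.Normal ∧ q.2 = Set.univ}

/-! ### Coarse equivalence of metric families -/

/-- A coarse equivalence between two indexed metric families: a family of maps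
`f i : Z i → W (σ i)` which is uniformly expansive and effectively proper, admitting
a coarse embedding `g i : W (σ i) → Z i` in the opposite direction with
`d(x, g(f x)) ≤ C` and `d(y, f(g y)) ≤ C`. -/
def FamCoarseEquiv {ι κ : Type*} {Z : ι → Type*} {W : κ → Type*}
    (d : ∀ i, Z i → Z i → ℝ) (e : ∀ j, W j → W j → ℝ) : Prop :=
  ∃ (σ : ι → κ) (f : ∀ i, Z i → W (σ i)) (g : ∀ i, W (σ i) → Z i)
    (ρ₁ ρ₂ ρ₃ ρ₄ : ℝ → ℝ) (C : ℝ),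
    Monotone ρ₁ ∧ ProperFn ρ₁ ∧ Monotone ρ₂ ∧ ProperFn ρ₂ ∧
    Monotone ρ₃ ∧ ProperFn ρ₃ ∧ Monotone ρ₄ ∧ ProperFn ρ₄ ∧
    (∀ i x x', e (σ i) (f i x) (f i x') ≤ ρ₁ (d i x x')) ∧
    (∀ i x x', ρ₂ (d i x x') ≤ e (σ i) (f i x) (f i x')) ∧
    (∀ i y y', d i (g i y) (g i y') ≤ ρ₃ (e (σ i) y y')) ∧
    (∀ i y y', ρ₄ (e (σ i) y y') ≤ d i (g i y) (g i y')) ∧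
    (∀ i x, d i x (g i (f i x)) ≤ C) ∧ (∀ i y, e (σ i) y (f i (g i y)) ≤ C)

/-! ### Amenability (Følner) and elementary amenability -/

/-- Følner characterization of amenability for a countable discrete group. -/
def Amenable (G : Type*) [Group G] : Prop :=
  ∀ (F : Finset G) (ε : ℝ), 0 < ε →
    ∃ S : Finset G, S.Nonempty ∧ ∀ g ∈ F,
      letI := Classical.decEq G
      (((S.image (fun s => g * s)) ∆ S).card : ℝ) ≤ ε * (S.card : ℝ)

/-- The class of elementary amenable groups: the smallest class of groups containing
the finite groups and the abelian groups and closed under extensions and directed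
unions. -/
inductive IsElementaryAmenable : ∀ (G : Type u) [Group G], Prop where
  | of_finite (G : Type u) [Group G] (h : Finite G) : IsElementaryAmenable G
  | of_comm (G : Type u) [Group G] (h : ∀ a b : G, a * b = b * a) :
      IsElementaryAmenable G
  | of_extension (N G Q : Type u) [Group N] [Group G] [Group Q]
      (φ : N →* G) (ψ : G →* Q) (hφ : Function.Injective φ)
      (hψ : Function.Surjective ψ) (hex : φ.range = ψ.ker)
      (hN : IsElementaryAmenable N) (hQ : IsElementaryAmenable Q) :
      IsElementaryAmenable G
  | of_directedUnion (G : Type u) [Group G] (ι : Type u) (K : ι → Subgroup G)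
      (hdir : ∀ i j, ∃ k, K i ≤ K k ∧ K j ≤ K k)
      (hcover : ∀ g : G, ∃ i, g ∈ K i)
      (hK : ∀ i, IsElementaryAmenable ↥(K i)) : IsElementaryAmenable G


section MyAux

lemma DColl_iff {ι : Type*} {Z : ι → Type*} (d : ∀ i, Z i → Z i → ℝ) (α : Ordinal.{0}) (𝒳 : Fam Z) :
    𝒳 ∈ DColl d α ↔ ((α = 0 ∧ Bdd d 𝒳) ∨
    (α ≠ 0 ∧ ∀ r : ℝ, 0 < r →
      ∃ β : Ordinal.{0}, ∃ _ : β < α, ∃ 𝒴 ∈ DColl d β, Decomp d r 𝒳 𝒴)) := by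
  rw [DColl]; rfl

lemma decomp_self {ι : Type*} {Z : ι → Type*} (d : ∀ i, Z i → Z i → ℝ) (r : ℝ) (𝒳 : Fam Z) :
    Decomp d r 𝒳 𝒳 := by
  intro p hp
  refine ⟨{p.2}, ∅, by simp, ?_, ?_, ?_⟩
  · intro A hA B hB hne; simp at hA hB; subst hA; subst hB; exact absurd rfl hne
  · intro A hA; simp at hA
  · intro A hA; simp at hA; subst hA; exact hp

lemma DColl_mono {ι : Type*} {Z : ι → Type*} (d : ∀ i, Z i → Z i → ℝ) {β α : Ordinal.{0}}
    (h : β ≤ α) : DColl d β ⊆ DColl d α := by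
  rcases eq_or_lt_of_le h with rfl | hlt
  · exact le_refl _
  · intro 𝒳 h𝒳
    rw [DColl_iff]
    right
    refine ⟨(pos_iff_ne_zero.mp (lt_of_le_of_lt (zero_le (a := β)) hlt)), ?_⟩
    intro r hr
    exact ⟨β, hlt, 𝒳, h𝒳, decomp_self d r 𝒳⟩

lemma pieceDecomp_mono {α : Type*} (d : α → α → ℝ) (r : ℝ) (X : Set α) {𝒴 𝒴' : Set (Set α)}
    (h : 𝒴 ⊆ 𝒴') (hX : PieceDecomp d r X 𝒴) : PieceDecomp d r X 𝒴' := by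
  obtain ⟨P₀, P₁, h1, h2, h3, h4⟩ := hX
  exact ⟨P₀, P₁, h1, h2, h3, fun A hA => h (h4 A hA)⟩

lemma DColl_union {ι : Type*} {Z : ι → Type*} (d : ∀ i, Z i → Z i → ℝ) :
    ∀ α : Ordinal.{0}, ∀ 𝒳 ∈ DColl d α, ∀ 𝒴 ∈ DColl d α, 𝒳 ∪ 𝒴 ∈ DColl d α := by
  intro α
  induction α using Ordinal.induction with
  | h α IH =>
    intro 𝒳 h𝒳 𝒴 h𝒴
    rw [DColl_iff] at h𝒳 h𝒴 ⊢
    rcases h𝒳 with ⟨rfl, C₁, hC₁⟩ | ⟨hne, hdec₁⟩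
    · rcases h𝒴 with ⟨-, C₂, hC₂⟩ | ⟨hne, -⟩
      · left
        refine ⟨rfl, max C₁ C₂, ?_⟩
        rintro p (hp | hp) x hx y hy
        · exact le_trans (hC₁ p hp x hx y hy) (le_max_left _ _)
        · exact le_trans (hC₂ p hp x hx y hy) (le_max_right _ _)
      · exact absurd rfl hne
    · rcases h𝒴 with ⟨rfl, -⟩ | ⟨-, hdec₂⟩
      · exact absurd rfl hne
      right
      refine ⟨hne, ?_⟩
      intro r hr
      obtain ⟨β₁, hβ₁, 𝒳', h𝒳', hd₁⟩ := hdec₁ r hr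
      obtain ⟨β₂, hβ₂, 𝒴', h𝒴', hd₂⟩ := hdec₂ r hr
      refine ⟨max β₁ β₂, max_lt hβ₁ hβ₂, 𝒳' ∪ 𝒴',
        IH _ (max_lt hβ₁ hβ₂) _ (DColl_mono d (le_max_left _ _) h𝒳')
          _ (DColl_mono d (le_max_right _ _) h𝒴'), ?_⟩
      rintro p (hp | hp)
      · exact pieceDecomp_mono _ _ _ (fun A hA => Or.inl hA) (hd₁ p hp)
      · exact pieceDecomp_mono _ _ _ (fun A hA => Or.inr hA) (hd₂ p hp)

/-- Pull back FDC along maps that are isometric on the relevant subsets. -/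
lemma DColl_transfer {ι κ : Type*} {Z : ι → Type*} {W : κ → Type*}
    (d : ∀ i, Z i → Z i → ℝ) (e : ∀ j, W j → W j → ℝ) :
    ∀ α : Ordinal.{0}, ∀ 𝒴 ∈ DColl e α, ∀ 𝒳 : Fam Z,
    (∀ p ∈ 𝒳, ∃ q ∈ 𝒴, ∃ φ : Z p.1 → W q.1,
      (∀ x ∈ p.2, ∀ y ∈ p.2, e q.1 (φ x) (φ y) = d p.1 x y) ∧ φ '' p.2 ⊆ q.2) →
    𝒳 ∈ DColl d α := by
  intro α
  induction α using Ordinal.induction with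
  | h α IH =>
    intro 𝒴 h𝒴 𝒳 hmap
    rw [DColl_iff] at h𝒴 ⊢
    rcases h𝒴 with ⟨rfl, C, hC⟩ | ⟨hne, hdec⟩
    · left
      refine ⟨rfl, C, ?_⟩
      intro p hp x hx y hy
      obtain ⟨q, hq, φ, hiso, him⟩ := hmap p hp
      calc d p.1 x y = e q.1 (φ x) (φ y) := (hiso x hx y hy).symm
        _ ≤ C := hC q hq _ (him ⟨x, hx, rfl⟩) _ (him ⟨y, hy, rfl⟩)
    · right
      refine ⟨hne, ?_⟩
      intro r hr
      obtain ⟨β, hβ, 𝒴', h𝒴', hd⟩ := hdec r hr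
      set 𝒳' : Fam Z := {p' | ∃ q' ∈ 𝒴', ∃ φ : Z p'.1 → W q'.1,
        (∀ x ∈ p'.2, ∀ y ∈ p'.2, e q'.1 (φ x) (φ y) = d p'.1 x y) ∧ φ '' p'.2 ⊆ q'.2}
        with h𝒳'def
      refine ⟨β, hβ, 𝒳', IH β hβ 𝒴' h𝒴' 𝒳' (fun p hp => hp), ?_⟩
      intro p hp
      obtain ⟨q, hq, φ, hiso, him⟩ := hmap p hp
      obtain ⟨P₀, P₁, hcov, hd₀, hd₁, hmem⟩ := hd q hq
      refine ⟨(fun C => p.2 ∩ φ ⁻¹' C) '' P₀, (fun C => p.2 ∩ φ ⁻¹' C) '' P₁, ?_, ?_, ?_, ?_⟩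
      · apply Set.Subset.antisymm
        · intro x hx
          have : φ x ∈ ⋃₀ P₀ ∪ ⋃₀ P₁ := by rw [← hcov]; exact him ⟨x, hx, rfl⟩
          rcases this with ⟨B, hB, hxB⟩ | ⟨B, hB, hxB⟩
          · exact Or.inl ⟨p.2 ∩ φ ⁻¹' B, ⟨B, hB, rfl⟩, hx, hxB⟩
          · exact Or.inr ⟨p.2 ∩ φ ⁻¹' B, ⟨B, hB, rfl⟩, hx, hxB⟩
        · rintro x (⟨A, ⟨B, -, rfl⟩, hx, -⟩ | ⟨A, ⟨B, -, rfl⟩, hx, -⟩) <;> exact hx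
      · rintro A ⟨B, hB, rfl⟩ A' ⟨B', hB', rfl⟩ hne' x ⟨hx, hxB⟩ y ⟨hy, hyB⟩
        have hBB' : B ≠ B' := fun h => hne' (by rw [h])
        calc r ≤ e q.1 (φ x) (φ y) := hd₀ B hB B' hB' hBB' _ hxB _ hyB
          _ = d p.1 x y := hiso x hx y hy
      · rintro A ⟨B, hB, rfl⟩ A' ⟨B', hB', rfl⟩ hne' x ⟨hx, hxB⟩ y ⟨hy, hyB⟩
        have hBB' : B ≠ B' := fun h => hne' (by rw [h])
        calc r ≤ e q.1 (φ x) (φ y) := hd₁ B hB B' hB' hBB' _ hxB _ hyB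
          _ = d p.1 x y := hiso x hx y hy
      · rintro A (⟨B, hB, rfl⟩ | ⟨B, hB, rfl⟩)
        · exact ⟨⟨q.1, B⟩, hmem B (Or.inl hB), φ,
            fun x hx y hy => hiso x hx.1 y hy.1, fun w ⟨x, hx, hw⟩ => hw ▸ hx.2⟩
        · exact ⟨⟨q.1, B⟩, hmem B (Or.inr hB), φ,
            fun x hx y hy => hiso x hx.1 y hy.1, fun w ⟨x, hx, hw⟩ => hw ▸ hx.2⟩

section Metric
variable {G : Type*} [Group G]

lemma qdist_nonneg (l : G → ℝ) (hl : IsLengthFunction l) (N : Subgroup G) (x y : G ⧸ N) :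
    0 ≤ qdist l N x y := by
  apply Real.sInf_nonneg
  rintro r ⟨g, h, -, -, rfl⟩
  exact hl.nonneg _

lemma diamD_set_finite {X : Type*} [Finite X] (d : X → X → ℝ) :
    {r : ℝ | ∃ x y : X, r = d x y}.Finite := by
  have : {r : ℝ | ∃ x y : X, r = d x y} = Set.range (fun p : X × X => d p.1 p.2) := by
    ext r; constructor
    · rintro ⟨x, y, rfl⟩; exact ⟨(x, y), rfl⟩
    · rintro ⟨⟨x, y⟩, rfl⟩; exact ⟨x, y, rfl⟩
  rw [this]
  exact Set.finite_range _

lemma le_diamD {X : Type*} [Finite X] (d : X → X → ℝ) (x y : X) : d x y ≤ diamD d :=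
  le_csSup (diamD_set_finite d).bddAbove ⟨x, y, rfl⟩

lemma diamD_nonneg {X : Type*} [Finite X] [Nonempty X] (d : X → X → ℝ)
    (hd : ∀ x y : X, 0 ≤ d x y) : 0 ≤ diamD d := by
  obtain ⟨x⟩ := ‹Nonempty X›
  exact le_trans (hd x x) (le_diamD d x x)

end Metric

section Stable
variable {G : Type*} [Group G]

/-- The natural isometry between `G ⧸ N` and `(⊤ : Subgroup G) ⧸ N.subgroupOf ⊤`. -/
lemma stable_iso (l : G → ℝ) (N : Subgroup G) [hN : N.Normal] :
    ∃ φ : G ⧸ N → ↥(⊤ : Subgroup G) ⧸ (N.subgroupOf ⊤),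
      ∀ x y : G ⧸ N,
        qdist (fun h : ↥(⊤ : Subgroup G) => l ↑h) (N.subgroupOf ⊤) (φ x) (φ y)
          = qdist l N x y := by
  haveI : (N.subgroupOf (⊤ : Subgroup G)).Normal := hN.comap _
  let j : G →* ↥(⊤ : Subgroup G) :=
    { toFun := fun g => ⟨g, trivial⟩, map_one' := rfl, map_mul' := fun _ _ => rfl }
  have hle : N ≤ (N.subgroupOf ⊤).comap j := by
    intro g hg
    simpa [Subgroup.mem_subgroupOf, j] using hg
  have hle' : N.subgroupOf ⊤ ≤ N.comap (⊤ : Subgroup G).subtype := by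
    intro a ha
    simpa [Subgroup.mem_subgroupOf] using ha
  let φ := QuotientGroup.map N (N.subgroupOf ⊤) j hle
  let ψ := QuotientGroup.map (N.subgroupOf ⊤) N (⊤ : Subgroup G).subtype hle'
  have hψφ : ∀ x : G ⧸ N, ψ (φ x) = x := by
    intro x
    induction x using QuotientGroup.induction_on with
    | H g => simp [φ, ψ, QuotientGroup.map_mk]; rfl
  refine ⟨φ, fun x y => ?_⟩
  unfold qdist
  congr 1
  ext r
  constructor
  · rintro ⟨a, b, ha, hb, rfl⟩
    refine ⟨(a : G), (b : G), ?_, ?_, ?_⟩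
    · rw [← hψφ x, ← ha]; rfl
    · rw [← hψφ y, ← hb]; rfl
    · simp [dl]
  · rintro ⟨g, h, rfl, rfl, rfl⟩
    refine ⟨j g, j h, ?_, ?_, ?_⟩
    · rfl
    · rfl
    · simp [dl, j]
end Stable

section MainAux
variable {G : Type*} [Group G]

lemma boxDist_same (l : G → ℝ) (N : ℕ → Subgroup G) (i : ℕ) (x y : G ⧸ N i) :
    boxDist l N ⟨i, x⟩ ⟨i, y⟩ = qdist l (N i) x y := by
  simp [boxDist, cuDist]

lemma boxDist_ne (l : G → ℝ) (N : ℕ → Subgroup G) {i j : ℕ} (h : i ≠ j)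
    (x : G ⧸ N i) (y : G ⧸ N j) :
    boxDist l N ⟨i, x⟩ ⟨j, y⟩ =
      diamD (qdist l (N i)) + diamD (qdist l (N j)) + i + j := by
  simp [boxDist, cuDist, h]

end MainAux

lemma tail_iso {G : Type*} [Group G] (l : G → ℝ) (N : ℕ → Subgroup G) (i : ℕ) :
    ∃ φ : (Σ j, G ⧸ N j) → G ⧸ N i, ∀ x ∈ {x : Σ j, G ⧸ N j | x.1 = i},
      ∀ y ∈ {x : Σ j, G ⧸ N j | x.1 = i},
        qdist l (N i) (φ x) (φ y) = boxDist l N x y := by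
  refine ⟨fun x => if h : x.1 = i then h ▸ x.2 else (QuotientGroup.mk 1), ?_⟩
  rintro ⟨i1, a⟩ hx ⟨j1, b⟩ hy
  obtain rfl : i1 = i := hx
  obtain rfl : j1 = i1 := hy
  simp [boxDist, cuDist]

theorem boxSpace_fdc_iff_family_fdc' {G : Type*} [Group G] [Countable G]
    (l : G → ℝ) (hl : IsLengthFunction l) (N : ℕ → Subgroup G)
    (hnorm : ∀ i, (N i).Normal) (hmono : ∀ i, N (i + 1) ≤ N i) (h0 : N 0 = ⊤)
    (hfin : ∀ i, (N i).FiniteIndex) (htriv : ∀ g : G, (∀ i, g ∈ N i) → g = 1) :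
    (SpaceFDC (boxDist l N) ↔
      HasFDC (fun i => qdist l (N i))
        {p : (i : ℕ) × Set (G ⧸ N i) | p.2 = Set.univ}) ∧
    (StableFDC G l → SpaceFDC (boxDist l N)) := by
  set q : ∀ i : ℕ, (G ⧸ N i) → (G ⧸ N i) → ℝ := fun i => qdist l (N i) with hqdef
  have hFinQ : ∀ i, Finite (G ⧸ N i) := fun i =>
    @Subgroup.finite_quotient_of_finiteIndex _ _ _ (hfin i)
  have hq0 : ∀ i (x y : G ⧸ N i), 0 ≤ q i x y := fun i => qdist_nonneg l hl (N i)
  have hdiam0 : ∀ i, 0 ≤ diamD (q i) := fun i =>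
    @diamD_nonneg _ (hFinQ i) ⟨(1 : G ⧸ N i)⟩ (q i) (hq0 i)
  have hled : ∀ i (x y : G ⧸ N i), q i x y ≤ diamD (q i) := fun i =>
    @le_diamD _ (hFinQ i) (q i)
  -- Direction: box FDC → family FDC
  have dir1 : SpaceFDC (boxDist l N) →
      HasFDC q {p : (i : ℕ) × Set (G ⧸ N i) | p.2 = Set.univ} := by
    rintro ⟨α, hα⟩
    refine ⟨α, DColl_transfer q (fun _ : Unit => boxDist l N) α _ hα _ ?_⟩
    intro p hp
    refine ⟨⟨(), Set.univ⟩, rfl, fun x : G ⧸ N p.1 => (⟨p.1, x⟩ : Σ i, G ⧸ N i), ?_, by simp⟩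
    intro x _ y _
    exact boxDist_same l N p.1 x y
  -- Direction: family FDC → box FDC
  have dir2 : HasFDC q {p : (i : ℕ) × Set (G ⧸ N i) | p.2 = Set.univ} →
      SpaceFDC (boxDist l N) := by
    rintro ⟨α, hα⟩
    have hlt : α < α + 1 := by
      rw [Ordinal.add_one_eq_succ]; exact Order.lt_succ α
    refine ⟨α + 1, ?_⟩
    rw [DColl_iff]
    right
    refine ⟨pos_iff_ne_zero.mp (lt_of_le_of_lt (zero_le (a := α)) hlt), ?_⟩
    intro r hr
    set m : ℕ := ⌈r⌉₊ with hmdef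
    have hrm : r ≤ (m : ℝ) := Nat.le_ceil r
    set Hset : Set (Σ i, G ⧸ N i) := {x | x.1 < m} with hHdef
    set Tset : ℕ → Set (Σ i, G ⧸ N i) := fun i => {x | x.1 = i} with hTdef
    set famH : Fam (fun _ : Unit => Σ i, G ⧸ N i) := {p | p.2 = Hset} with hfamH
    set famT : Fam (fun _ : Unit => Σ i, G ⧸ N i) :=
      {p | ∃ i, m ≤ i ∧ p.2 = Tset i} with hfamT
    set D : ℝ := ∑ i ∈ Finset.range m, |diamD (q i)| with hDdef
    have hD : ∀ i < m, diamD (q i) ≤ D := fun i hi =>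
      le_trans (le_abs_self _)
        (Finset.single_le_sum (f := fun i => |diamD (q i)|)
          (fun _ _ => abs_nonneg _) (Finset.mem_range.mpr hi))
    have hD0 : 0 ≤ D := Finset.sum_nonneg fun _ _ => abs_nonneg _
    refine ⟨α, hlt, famH ∪ famT, ?_, ?_⟩
    · apply DColl_union
      · -- famH is bounded
        apply DColl_mono _ (zero_le (a := α))
        rw [DColl_iff]
        left
        refine ⟨rfl, D + D + m + m, ?_⟩
        intro p hp x hx y hy
        show boxDist l N x y ≤ D + D + m + m
        rw [hp] at hx hy
        obtain ⟨i, a⟩ := x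
        obtain ⟨j, b⟩ := y
        have hi : i < m := hx
        have hj : j < m := hy
        have him : (i : ℝ) ≤ m := by exact_mod_cast le_of_lt hi
        have hjm : (j : ℝ) ≤ m := by exact_mod_cast le_of_lt hj
        by_cases hij : i = j
        · subst hij
          have h1 : boxDist l N ⟨i, a⟩ ⟨i, b⟩ = q i a b := boxDist_same l N i a b
          have h2 := hled i a b
          have h3 := hD i hi
          have him0 : (0 : ℝ) ≤ m := Nat.cast_nonneg m
          linarith
        · rw [boxDist_ne l N hij a b]
          have h3 := hD i hi
          have h4 := hD j hj
          linarith
      · -- the tails: transfer from the family FDC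
        refine DColl_transfer _ q α _ hα famT ?_
        rintro p ⟨i, hi, hp2⟩
        obtain ⟨φ, hφ⟩ := tail_iso l N i
        refine ⟨⟨i, Set.univ⟩, rfl, φ, ?_, by simp⟩
        intro x hx y hy
        rw [hp2] at hx hy
        exact hφ x hx y hy
    · -- the decomposition of the whole box space
      intro p hp
      refine ⟨{Hset}, Tset '' {i | m ≤ i}, ?_, ?_, ?_, ?_⟩
      · rw [hp]
        apply Set.Subset.antisymm
        · intro x _
          by_cases h : x.1 < m
          · exact Or.inl ⟨Hset, rfl, h⟩
          · exact Or.inr ⟨Tset x.1, ⟨x.1, not_lt.mp h, rfl⟩, rfl⟩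
        · exact fun x _ => Set.mem_univ x
      · intro A hA B hB hne
        simp only [Set.mem_singleton_iff] at hA hB
        subst hA; subst hB; exact absurd rfl hne
      · rintro A ⟨i, hi, rfl⟩ B ⟨j, hj, rfl⟩ hne x hx y hy
        have hij : i ≠ j := fun h => hne (by rw [h])
        obtain ⟨i', a⟩ := x
        obtain ⟨j', b⟩ := y
        have hi' : i' = i := hx
        have hj' : j' = j := hy
        subst hi'; subst hj'
        show r ≤ boxDist l N ⟨i', a⟩ ⟨j', b⟩
        rw [boxDist_ne l N hij a b]
        have h1 := hdiam0 i'
        have h2 := hdiam0 j'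
        have him : (m : ℝ) ≤ i' := by exact_mod_cast hi
        have hjm : (m : ℝ) ≤ j' := by exact_mod_cast hj
        have hm0 : (0 : ℝ) ≤ m := Nat.cast_nonneg m
        linarith
      · rintro A (hA | ⟨i, hi, rfl⟩)
        · simp only [Set.mem_singleton_iff] at hA
          subst hA
          exact Or.inl rfl
        · exact Or.inr ⟨i, hi, rfl⟩
  refine ⟨⟨dir1, dir2⟩, ?_⟩
  -- stable FDC → box FDC
  rintro ⟨α, hS⟩
  apply dir2
  refine ⟨α, DColl_transfer q (stableD l) α _ hS _ ?_⟩
  intro p hp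
  haveI := hnorm p.1
  obtain ⟨φ, hφ⟩ := stable_iso l (N p.1)
  haveI : ((N p.1).subgroupOf (⊤ : Subgroup G)).Normal := (hnorm p.1).comap _
  refine ⟨⟨⟨⊤, (N p.1).subgroupOf ⊤⟩, Set.univ⟩, ⟨this, rfl⟩, φ, ?_, by simp⟩
  intro x _ y _
  exact hφ x y

end MyAux

/-- Lemma `box lem`: the box space `□_{Nᵢ} G` has FDC iff the
metric family `{G/Nᵢ}` has FDC; in particular, if `G` has stable FDC then the box
space has FDC. -/
theorem boxSpace_fdc_iff_family_fdc {G : Type*} [Group G] [Countable G]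
    (l : G → ℝ) (hl : IsLengthFunction l) (N : ℕ → Subgroup G)
    (hnorm : ∀ i, (N i).Normal) (hmono : ∀ i, N (i + 1) ≤ N i) (h0 : N 0 = ⊤)
    (hfin : ∀ i, (N i).FiniteIndex) (htriv : ∀ g : G, (∀ i, g ∈ N i) → g = 1) :
    (SpaceFDC (boxDist l N) ↔
      HasFDC (fun i => qdist l (N i))
        {p : (i : ℕ) × Set (G ⧸ N i) | p.2 = Set.univ}) ∧
    (StableFDC G l → SpaceFDC (boxDist l N)) :=
  boxSpace_fdc_iff_family_fdc' l hl N hnorm hmono h0 hfin htriv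

end FDCPaper
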